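/- Let Y = E_min = {e ∈ E : η*(e) = min_{e'∈E} η*(e')} and write η*_min = min_{e'∈E} η*(e'). Then: (1) η*(Y) = r(Y); (2) cl(Y) = Y; (3) η*_min = r(Y)/|Y| > 0; (4) η*_min = 1/D(M); (5) the unique point of minimum Euclidean norm in the convex hull of the indicator vectors of the bases of the restriction M|Y is the constant vector on Y with value η*_min. -/

import Mathlib

open Set Matroid

/-- The rank of a set in a matroid: the maximum cardinality of an independent subset. -/
noncomputable def Matroid.rk' {α : Type*} (M : Matroid α) (X : Set α) : ℕ :=
  sSup {n : ℕ | ∃ I, I ⊆ X ∧ M.Indep I ∧ n = Nat.card I}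

/-- The set of indicator vectors of bases of a matroid, viewed as vectors in `ℝ^E`. -/
def Matroid.baseVecs {α : Type*} (M : Matroid α) : Set (α → ℝ) :=
  {f | ∃ B, M.IsBase B ∧ f = B.indicator 1}

/-- A matroid is loopless if every singleton of the ground set is independent. -/
def Matroid.Loopless' {α : Type*} (M : Matroid α) : Prop := ∀ e ∈ M.E, M.Indep {e}

/-- The fractional arboricity `D(M) = max{ |X| / r(X) : X ⊆ E, r(X) > 0 }`. -/
noncomputable def Matroid.arboricity {α : Type*} (M : Matroid α) : ℝ :=
  sSup {s : ℝ | ∃ X, X ⊆ M.E ∧ 0 < M.rk' X ∧ s = (Nat.card X : ℝ) / (M.rk' X : ℝ)}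

-- ### Auxiliary lemmas
section Aux
variable {α : Type*} [Fintype α]

/-- finset of a set -/
noncomputable def fs (S : Set α) : Finset α := (Set.toFinite S).toFinset

lemma mem_fs {S : Set α} {e : α} : e ∈ fs S ↔ e ∈ S := Set.Finite.mem_toFinset _

lemma card_fs (S : Set α) : (fs S).card = S.ncard := (Set.ncard_eq_toFinset_card _ _).symm

lemma fs_mono {S T : Set α} (h : S ⊆ T) : fs S ⊆ fs T := fun e he => mem_fs.2 (h (mem_fs.1 he))

lemma sum_univ_indicator (S : Set α) (g : α → ℝ) :
    ∑ e, S.indicator g e = ∑ e ∈ fs S, g e := by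
  classical
  rw [Finset.sum_indicator_eq_sum_filter]
  apply Finset.sum_congr _ (fun _ _ => rfl)
  ext e; simp [mem_fs]

lemma sum_fs_indicator (S T : Set α) (g : α → ℝ) :
    ∑ e ∈ fs T, S.indicator g e = ∑ e ∈ fs (S ∩ T), g e := by
  classical
  rw [Finset.sum_indicator_eq_sum_filter]
  apply Finset.sum_congr _ (fun _ _ => rfl)
  ext e; simp [mem_fs]; tauto

lemma sum_fs_indicator_one (S T : Set α) :
    ∑ e ∈ fs T, S.indicator (1 : α → ℝ) e = ((S ∩ T).ncard : ℝ) := by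
  rw [sum_fs_indicator, ← card_fs]
  simp

lemma sum_univ_eq_fs (S : Set α) (g : α → ℝ) (h : ∀ e ∉ S, g e = 0) :
    ∑ e, g e = ∑ e ∈ fs S, g e :=
  (Finset.sum_subset (Finset.subset_univ _)
    (fun e _ he => h e (fun hc => he (mem_fs.2 hc)))).symm

lemma rk'_eq_of_basis {M : Matroid α} {I X : Set α} (h : M.IsBasis I X) :
    M.rk' X = I.ncard := by
  have hub : ∀ n ∈ {n : ℕ | ∃ J, J ⊆ X ∧ M.Indep J ∧ n = Nat.card J}, n ≤ I.ncard := by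
    rintro n ⟨J, hJX, hJ, rfl⟩
    obtain ⟨I', hI', hJI'⟩ := hJ.subset_isBasis_of_subset hJX h.subset_ground
    have hcard : I'.encard = I.encard := hI'.encard_eq_encard h
    have : I'.ncard = I.ncard := by rw [Set.ncard, Set.ncard, hcard]
    rw [Nat.card_coe_set_eq, ← this]
    exact Set.ncard_le_ncard hJI' (Set.toFinite _)
  have hmem : I.ncard ∈ {n : ℕ | ∃ J, J ⊆ X ∧ M.Indep J ∧ n = Nat.card J} :=
    ⟨I, h.subset, h.indep, (Nat.card_coe_set_eq _).symm⟩
  exact le_antisymm (csSup_le ⟨_, hmem⟩ hub) (le_csSup ⟨_, hub⟩ hmem)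

lemma ncard_le_rk' {M : Matroid α} {J X : Set α} (hJ : M.Indep J) (hJX : J ⊆ X)
    (hX : X ⊆ M.E) : J.ncard ≤ M.rk' X := by
  obtain ⟨I, hI, hJI⟩ := hJ.subset_isBasis_of_subset hJX hX
  rw [rk'_eq_of_basis hI]
  exact Set.ncard_le_ncard hJI (Set.toFinite _)

lemma min_norm_dir {S : Set (α → ℝ)} (hconv : Convex ℝ S) {ηs d : α → ℝ}
    (hηs : ηs ∈ S) (hmin : ∀ η ∈ S, ∑ e, ηs e ^ 2 ≤ ∑ e, η e ^ 2)
    {l : ℝ} (hl : 0 < l) (hb : ηs + l • d ∈ S) : 0 ≤ ∑ e, ηs e * d e := by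
  by_contra hcon
  push_neg at hcon
  set c := ∑ e, ηs e * d e with hc
  set K := ∑ e, d e ^ 2 with hKdef
  have hK : 0 ≤ K := Finset.sum_nonneg (fun e _ => sq_nonneg _)
  set ε := min l (-c / (K + 1)) with hεdef
  have hε : 0 < ε := lt_min hl (div_pos (neg_pos.2 hcon) (by linarith))
  have hεl : ε ≤ l := min_le_left _ _
  have hmem : ηs + ε • d ∈ S := by
    have heq : ηs + ε • d = (1 - ε / l) • ηs + (ε / l) • (ηs + l • d) := by
      funext e
      simp only [Pi.add_apply, Pi.smul_apply, smul_eq_mul]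
      field_simp
      ring
    rw [heq]
    exact hconv hηs hb (by rw [sub_nonneg]; exact div_le_one_of_le₀ hεl hl.le)
      (by positivity) (by field_simp; ring)
  have hle := hmin _ hmem
  have hexp : ∑ e, (ηs + ε • d) e ^ 2 = ∑ e, ηs e ^ 2 + (2 * ε * c + ε ^ 2 * K) := by
    have h1 : ∀ e : α, (ηs + ε • d) e ^ 2
        = ηs e ^ 2 + (2 * ε * (ηs e * d e) + ε ^ 2 * d e ^ 2) := by
      intro e
      simp only [Pi.add_apply, Pi.smul_apply, smul_eq_mul]
      ring
    rw [Finset.sum_congr rfl (fun e _ => h1 e), Finset.sum_add_distrib,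
      Finset.sum_add_distrib, ← Finset.mul_sum, ← Finset.mul_sum, hc, hKdef]
  rw [hexp] at hle
  have h2 : 0 ≤ 2 * ε * c + ε ^ 2 * K := by linarith
  have h3 : ε * (K + 1) ≤ -c := by
    have := min_le_right l (-c / (K + 1))
    rw [hεdef] at *
    exact (le_div_iff₀ (by linarith)).1 this
  nlinarith

lemma shift_mem_hull {S : Set (α → ℝ)} {ι : Type*} {t : Finset ι} {w : ι → ℝ} {z : ι → α → ℝ}
    (hw0 : ∀ j ∈ t, 0 ≤ w j) (hw1 : ∑ j ∈ t, w j = 1) (hz : ∀ j ∈ t, z j ∈ S)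
    {i : ι} (hi : i ∈ t) {v : α → ℝ} (hv : v ∈ S) :
    (∑ j ∈ t, w j • z j) + w i • (v - z i) ∈ convexHull ℝ S := by
  classical
  have heq : (∑ j ∈ t, w j • z j) + w i • (v - z i)
      = ∑ j ∈ t, w j • Function.update z i v j := by
    have h1 : ∀ j ∈ t, w j • Function.update z i v j
        = Function.update (fun j => w j • z j) i (w i • v) j := by
      intro j _
      by_cases hj : j = i
      · subst hj; simp [Function.update_self]
      · simp [Function.update_of_ne hj]
    rw [Finset.sum_congr rfl h1, Finset.sum_update_of_mem hi,
      Finset.sum_eq_sum_sdiff_singleton_add hi (fun j => w j • z j)]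
    rw [smul_sub]
    abel
  rw [heq]
  exact (convex_convexHull ℝ S).sum_mem hw0 hw1 (fun j hj => by
    by_cases hji : j = i
    · subst hji; rw [Function.update_self]; exact subset_convexHull ℝ S hv
    · rw [Function.update_of_ne hji]; exact subset_convexHull ℝ S (hz j hj))

lemma sum_mul_indicator_one (S : Set α) (f : α → ℝ) :
    ∑ e, f e * S.indicator (1 : α → ℝ) e = ∑ e ∈ fs S, f e := by
  rw [← sum_univ_indicator]
  apply Finset.sum_congr rfl
  intro e _
  by_cases he : e ∈ S
  · rw [Set.indicator_of_mem he, Set.indicator_of_mem he, Pi.one_apply, mul_one]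
  · rw [Set.indicator_of_notMem he, Set.indicator_of_notMem he, mul_zero]

lemma support_base_le {M : Matroid α} {ηs : α → ℝ} {ι : Type*} {t : Finset ι}
    {w : ι → ℝ} {z : ι → α → ℝ}
    (hw0 : ∀ j ∈ t, 0 ≤ w j) (hw1 : ∑ j ∈ t, w j = 1)
    (hz : ∀ j ∈ t, z j ∈ M.baseVecs) (hsum : ∑ j ∈ t, w j • z j = ηs)
    (hmin : ∀ η ∈ convexHull ℝ M.baseVecs, ∑ e, ηs e ^ 2 ≤ ∑ e, η e ^ 2)
    {i : ι} (hi : i ∈ t) (hwi : 0 < w i) {B : Set α} (hzB : z i = B.indicator 1)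
    {B' : Set α} (hB' : M.IsBase B') :
    ∑ e ∈ fs B, ηs e ≤ ∑ e ∈ fs B', ηs e := by
  have hv : B'.indicator (1 : α → ℝ) ∈ M.baseVecs := ⟨B', hB', rfl⟩
  have hb := shift_mem_hull hw0 hw1 hz hi hv
  rw [hsum, hzB] at hb
  have hmem : ηs ∈ convexHull ℝ M.baseVecs := by
    rw [← hsum]
    exact (convex_convexHull ℝ _).sum_mem hw0 hw1
      (fun j hj => subset_convexHull ℝ _ (hz j hj))
  have h0 := min_norm_dir (convex_convexHull ℝ _) hmem hmin hwi hb
  have hexp : ∑ e, ηs e * (B'.indicator (1 : α → ℝ) - B.indicator (1 : α → ℝ)) e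
      = (∑ e ∈ fs B', ηs e) - ∑ e ∈ fs B, ηs e := by
    rw [← sum_mul_indicator_one B' ηs, ← sum_mul_indicator_one B ηs,
      ← Finset.sum_sub_distrib]
    apply Finset.sum_congr rfl
    intro e _
    simp only [Pi.sub_apply]
    ring
  rw [hexp] at h0
  linarith

lemma fs_insert [DecidableEq α] (e : α) (S : Set α) :
    fs (insert e S) = insert e (fs S) := by
  ext x; simp [mem_fs]

end Aux

/-- Properties of the set `E_min` where `η*` attains its minimum: `η*(Y) = r(Y)`, `Y` is
closed, the minimum value is `r(Y)/|Y| > 0`, it equals `1/D(M)`, and the minimum-norm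
point of the convex hull of base indicator vectors of the restriction `M|Y` is the
constant vector `η*_min` on `Y`. -/
theorem etaStar_min_level_set {α : Type*} [Fintype α] [Nonempty α]
    (M : Matroid α) (hE : M.E = Set.univ)
    (hloop : M.Loopless') (hrk : 0 < M.rk' M.E)
    (ηs : α → ℝ) (hmem : ηs ∈ convexHull ℝ M.baseVecs)
    (hmin : ∀ η ∈ convexHull ℝ M.baseVecs, ∑ e, ηs e ^ 2 ≤ ∑ e, η e ^ 2)
    (ηmin : ℝ) (hηmin : IsLeast (Set.range ηs) ηmin)
    (Y : Set α) (hYdef : Y = {e : α | ηs e = ηmin}) :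
    (∑ e, Y.indicator ηs e = (M.rk' Y : ℝ)) ∧
    (M.closure Y = Y) ∧
    (ηmin = (M.rk' Y : ℝ) / (Nat.card Y : ℝ) ∧ 0 < ηmin) ∧
    (ηmin = 1 / M.arboricity) ∧
    ((Y.indicator (fun _ ↦ ηmin) ∈ convexHull ℝ (M ↾ Y).baseVecs) ∧
      ∀ η ∈ convexHull ℝ (M ↾ Y).baseVecs,
        ∑ e, (Y.indicator (fun _ ↦ ηmin)) e ^ 2 ≤ ∑ e, η e ^ 2) := by
  classical
  -- ## decomposition of ηs as a convex combination of base indicator vectors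
  rw [_root_.convexHull_eq] at hmem
  obtain ⟨ι, t0, w, z, hw00, hw10, hz0, hcm⟩ := hmem
  rw [Finset.centerMass_eq_of_sum_1 _ _ hw10] at hcm
  set t : Finset ι := t0.filter (fun i => w i ≠ 0) with ht
  have htsub : t ⊆ t0 := Finset.filter_subset _ _
  have hw0 : ∀ i ∈ t, 0 < w i := by
    intro i hi
    rw [ht, Finset.mem_filter] at hi
    exact lt_of_le_of_ne (hw00 i hi.1) (Ne.symm hi.2)
  have hw1 : ∑ i ∈ t, w i = 1 := by rw [ht, Finset.sum_filter_ne_zero]; exact hw10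
  have hz : ∀ i ∈ t, z i ∈ M.baseVecs := fun i hi => hz0 i (htsub hi)
  have hsum : ∑ i ∈ t, w i • z i = ηs := by
    rw [ht, Finset.sum_filter_of_ne]
    · exact hcm
    · intro i _ hne hzero
      exact hne (by rw [hzero, zero_smul])
  choose! Bs hBs hzB using hz
  have hηs_eq : ∀ e, ηs e = ∑ i ∈ t, w i * (Bs i).indicator (1 : α → ℝ) e := by
    intro e
    rw [← hsum, Finset.sum_apply]
    exact Finset.sum_congr rfl (fun i hi => by rw [Pi.smul_apply, smul_eq_mul, hzB i hi])
  have hnn : ∀ e, 0 ≤ ηs e := by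
    intro e
    rw [hηs_eq e]
    exact Finset.sum_nonneg fun i hi =>
      mul_nonneg (hw0 i hi).le (Set.indicator_nonneg (fun _ _ => zero_le_one) e)
  have hminle : ∀ e, ηmin ≤ ηs e := fun e => hηmin.2 ⟨e, rfl⟩
  obtain ⟨e0, he0⟩ := hηmin.1
  have hmin0 : 0 ≤ ηmin := he0 ▸ hnn e0
  have hlow : ∀ i ∈ t, ∀ e ∈ Bs i, w i ≤ ηs e := by
    intro i hi e he
    rw [hηs_eq e]
    have : w i * (Bs i).indicator (1 : α → ℝ) e = w i := by
      rw [Set.indicator_of_mem he, Pi.one_apply, mul_one]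
    calc w i = w i * (Bs i).indicator (1 : α → ℝ) e := this.symm
      _ ≤ ∑ j ∈ t, w j * (Bs j).indicator (1 : α → ℝ) e := by
          apply Finset.single_le_sum (f := fun j => w j * (Bs j).indicator (1 : α → ℝ) e)
            (fun j hj => mul_nonneg (hw0 j hj).le
              (Set.indicator_nonneg (fun _ _ => zero_le_one) e)) hi
  have hxch : ∀ i ∈ t, ∀ B' : Set α, M.IsBase B' →
      ∑ e ∈ fs (Bs i), ηs e ≤ ∑ e ∈ fs B', ηs e := by
    intro i hi B' hB'
    exact support_base_le (fun j hj => (hw0 j hj).le) hw1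
      (fun j hj => (hzB j hj) ▸ ⟨Bs j, hBs j hj, rfl⟩) hsum hmin hi (hw0 i hi)
      (hzB i hi) hB'
  have htne : t.Nonempty := by
    by_contra hc
    rw [Finset.not_nonempty_iff_eq_empty] at hc
    rw [hc, Finset.sum_empty] at hw1
    norm_num at hw1
  -- ## key exchange consequence
  have hkey : ∀ i ∈ t, ∀ I : Set α, M.Indep I → ∀ e ∈ I, e ∉ Bs i →
      I ⊆ insert e (Bs i) → ∃ f, f ∈ Bs i ∧ f ∉ I ∧ ηs f ≤ ηs e := by
    intro i hi I hI e heI heB hIsub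
    obtain ⟨B', hB', hIB', hB'sub⟩ := hI.exists_isBase_subset_union_isBase (hBs i hi)
    have hne : (Bs i \ B').Nonempty := by
      rw [Set.diff_nonempty]
      intro hsub
      have := (hBs i hi).eq_of_subset_isBase hB' hsub
      exact heB (this ▸ hIB' heI)
    obtain ⟨f, hfB, hfB'⟩ := hne
    have hfI : f ∉ I := fun hfI => hfB' (hIB' hfI)
    refine ⟨f, hfB, hfI, ?_⟩
    have hsub2 : insert f B' ⊆ insert e (Bs i) := by
      intro x hx
      rcases hx with rfl | hx
      · exact Set.mem_insert_of_mem _ hfB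
      · rcases hB'sub hx with hxI | hxB
        · exact hIsub hxI
        · exact Set.mem_insert_of_mem _ hxB
    have heBs : e ∉ Bs i := heB
    have hmono : ∑ x ∈ fs (insert f B'), ηs x ≤ ∑ x ∈ fs (insert e (Bs i)), ηs x :=
      Finset.sum_le_sum_of_subset_of_nonneg (fs_mono hsub2) (fun x _ _ => hnn x)
    rw [fs_insert, fs_insert, Finset.sum_insert (fun h => hfB' (mem_fs.1 h)),
      Finset.sum_insert (fun h => heBs (mem_fs.1 h))] at hmono
    have := hxch i hi B' hB'
    linarith
  -- ## positivity of the minimum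
  have hmin_pos : 0 < ηmin := by
    rcases lt_or_eq_of_le hmin0 with h | h
    · exact h
    obtain ⟨i, hi⟩ := htne
    have he0B : e0 ∉ Bs i := by
      intro hmem
      have := hlow i hi e0 hmem
      rw [he0, ← h] at this
      exact absurd this (not_le.2 (hw0 i hi))
    have hIe0 : M.Indep {e0} := hloop e0 (by rw [hE]; trivial)
    obtain ⟨f, hfB, -, hfle⟩ := hkey i hi {e0} hIe0 e0 rfl he0B
      (by intro x hx; rw [hx]; exact Set.mem_insert _ _)
    have := hlow i hi f hfB
    rw [he0, ← h] at hfle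
    linarith [hw0 i hi]
  have he0Y : e0 ∈ Y := by rw [hYdef]; exact he0
  have hYE : Y ⊆ M.E := by rw [hE]; exact Set.subset_univ _
  have hgt : ∀ f, f ∉ Y → ηmin < ηs f := by
    intro f hf
    rcases lt_or_eq_of_le (hminle f) with h | h
    · exact h
    · exact absurd (by rw [hYdef]; exact h.symm) hf
  -- ## every support base spans Y
  have hspan : ∀ i ∈ t, Y ⊆ M.closure (Bs i ∩ Y) := by
    intro i hi e he
    by_contra hecl
    have hBiY : M.Indep (Bs i ∩ Y) := (hBs i hi).indep.subset Set.inter_subset_left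
    have heE : e ∈ M.E := by rw [hE]; trivial
    obtain ⟨hins, heni⟩ := ((hBiY.notMem_closure_iff heE).1 hecl)
    have heB : e ∉ Bs i := fun hmem => heni ⟨hmem, he⟩
    obtain ⟨f, hfB, hfI, hfle⟩ := hkey i hi (insert e (Bs i ∩ Y)) hins e
      (Set.mem_insert _ _) heB
      (Set.insert_subset_insert Set.inter_subset_left)
    have hfY : f ∉ Y := fun hfY => hfI (Set.mem_insert_of_mem _ ⟨hfB, hfY⟩)
    have hee : ηs e = ηmin := by rw [hYdef] at he; exact he
    have := hgt f hfY
    rw [hee] at hfle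
    linarith
  have hbasis : ∀ i ∈ t, M.IsBasis (Bs i ∩ Y) Y := fun i hi =>
    ((hBs i hi).indep.subset Set.inter_subset_left).isBasis_of_subset_of_subset_closure
      Set.inter_subset_right (hspan i hi)
  have hcardiY : ∀ i ∈ t, ((Bs i ∩ Y).ncard : ℝ) = (M.rk' Y : ℝ) := fun i hi => by
    rw [rk'_eq_of_basis (hbasis i hi)]
  -- ## Part 1
  have hP1 : ∑ e, Y.indicator ηs e = (M.rk' Y : ℝ) := by
    rw [sum_univ_indicator]
    calc ∑ e ∈ fs Y, ηs e
        = ∑ e ∈ fs Y, ∑ i ∈ t, w i * (Bs i).indicator (1 : α → ℝ) e :=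
          Finset.sum_congr rfl (fun e _ => hηs_eq e)
      _ = ∑ i ∈ t, ∑ e ∈ fs Y, w i * (Bs i).indicator (1 : α → ℝ) e := Finset.sum_comm
      _ = ∑ i ∈ t, w i * ((Bs i ∩ Y).ncard : ℝ) := by
          apply Finset.sum_congr rfl
          intro i hi
          rw [← Finset.mul_sum, sum_fs_indicator_one]
      _ = ∑ i ∈ t, w i * (M.rk' Y : ℝ) :=
          Finset.sum_congr rfl (fun i hi => by rw [hcardiY i hi])
      _ = (M.rk' Y : ℝ) := by rw [← Finset.sum_mul, hw1, one_mul]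
  -- ## cardinalities
  have hYne : Y.Nonempty := ⟨e0, he0Y⟩
  have hYcard_pos : 0 < Y.ncard := (Set.ncard_pos (Set.toFinite Y)).2 hYne
  have hrY_pos : 0 < M.rk' Y := by
    have h1 : ({e0} : Set α).ncard ≤ M.rk' Y :=
      ncard_le_rk' (hloop e0 (hYE he0Y)) (Set.singleton_subset_iff.2 he0Y) hYE
    simpa [Nat.one_le_iff_ne_zero, Nat.pos_iff_ne_zero] using h1
  -- ## Part 3
  have hsumY_const : ∑ e ∈ fs Y, ηs e = (Y.ncard : ℝ) * ηmin := by
    rw [← card_fs]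
    rw [Finset.sum_congr rfl (fun e he => show ηs e = ηmin by
      have := mem_fs.1 he; rw [hYdef] at this; exact this)]
    rw [Finset.sum_const, nsmul_eq_mul]
  have hP3 : ηmin = (M.rk' Y : ℝ) / (Nat.card Y : ℝ) := by
    rw [Nat.card_coe_set_eq, eq_div_iff (by positivity), mul_comm]
    rw [sum_univ_indicator] at hP1
    rw [← hsumY_const, hP1]
  -- ## Part 2
  have hP2 : M.closure Y = Y := by
    refine subset_antisymm ?_ (M.subset_closure Y hYE)
    intro e he
    by_contra heY
    have hepos : 0 < ηs e := lt_of_lt_of_le hmin_pos (hminle e)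
    have hiB : ∃ i ∈ t, e ∈ Bs i := by
      by_contra hno
      push_neg at hno
      have : ηs e = 0 := by
        rw [hηs_eq e]
        apply Finset.sum_eq_zero
        intro i hi
        rw [Set.indicator_of_notMem (hno i hi), mul_zero]
      rw [this] at hepos
      exact lt_irrefl _ hepos
    obtain ⟨i, hi, heB⟩ := hiB
    have hclY : M.closure Y ⊆ M.closure (Bs i \ {e}) := by
      have h1 : M.closure Y ⊆ M.closure (Bs i ∩ Y) :=
        M.closure_subset_closure_of_subset_closure (hspan i hi)
      refine h1.trans (M.closure_subset_closure ?_)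
      intro x hx
      exact ⟨hx.1, fun hxe => heY (hxe ▸ hx.2)⟩
    have heclB : e ∈ M.closure (Bs i \ {e}) := hclY he
    have hBsub : Bs i ⊆ M.closure (Bs i \ {e}) := by
      intro x hx
      by_cases hxe : x = e
      · exact hxe ▸ heclB
      · exact M.subset_closure _ (fun y hy => (hBs i hi).subset_ground hy.1) ⟨hx, hxe⟩
    have hspanning : M.Spanning (Bs i \ {e}) := by
      rw [spanning_iff_closure_eq (fun y hy => (hBs i hi).subset_ground hy.1)]
      refine subset_antisymm (M.closure_subset_ground _) ?_
      rw [← (hBs i hi).closure_eq]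
      exact M.closure_subset_closure_of_subset_closure hBsub
    obtain ⟨B'', hB'', hBsub2⟩ := hspanning.exists_isBase_subset
    have : B'' = Bs i := hB''.eq_of_subset_isBase (hBs i hi) (hBsub2.trans Set.diff_subset)
    exact ((this ▸ hBsub2) heB).2 rfl
  -- ## Part 4
  have hXbound : ∀ X : Set α, ∑ e ∈ fs X, ηs e ≤ (M.rk' X : ℝ) := by
    intro X
    calc ∑ e ∈ fs X, ηs e
        = ∑ i ∈ t, w i * ((Bs i ∩ X).ncard : ℝ) := by
          rw [Finset.sum_congr rfl (fun e (_ : e ∈ fs X) => hηs_eq e), Finset.sum_comm]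
          exact Finset.sum_congr rfl (fun i hi => by rw [← Finset.mul_sum, sum_fs_indicator_one])
      _ ≤ ∑ i ∈ t, w i * (M.rk' X : ℝ) := by
          apply Finset.sum_le_sum
          intro i hi
          apply mul_le_mul_of_nonneg_left _ (hw0 i hi).le
          exact_mod_cast ncard_le_rk' ((hBs i hi).indep.subset Set.inter_subset_left)
            Set.inter_subset_right (by rw [hE]; exact Set.subset_univ _)
      _ = (M.rk' X : ℝ) := by rw [← Finset.sum_mul, hw1, one_mul]
  set D : ℝ := (Y.ncard : ℝ) / (M.rk' Y : ℝ) with hD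
  have hDmem : D ∈ {s : ℝ | ∃ X, X ⊆ M.E ∧ 0 < M.rk' X ∧
      s = (Nat.card X : ℝ) / (M.rk' X : ℝ)} :=
    ⟨Y, hYE, hrY_pos, by rw [hD, Nat.card_coe_set_eq]⟩
  have hDub : ∀ s ∈ {s : ℝ | ∃ X, X ⊆ M.E ∧ 0 < M.rk' X ∧
      s = (Nat.card X : ℝ) / (M.rk' X : ℝ)}, s ≤ D := by
    rintro s ⟨X, hXE, hrX, rfl⟩
    rw [Nat.card_coe_set_eq, hD]
    have hlb : ηmin * (X.ncard : ℝ) ≤ ∑ e ∈ fs X, ηs e := by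
      calc ηmin * (X.ncard : ℝ) = ∑ e ∈ fs X, ηmin := by
            rw [Finset.sum_const, nsmul_eq_mul, card_fs, mul_comm]
        _ ≤ ∑ e ∈ fs X, ηs e := Finset.sum_le_sum (fun e _ => hminle e)
    have hXb := (hlb.trans (hXbound X))
    have hrXpos : (0 : ℝ) < (M.rk' X : ℝ) := by exact_mod_cast hrX
    have hrYpos : (0 : ℝ) < (M.rk' Y : ℝ) := by exact_mod_cast hrY_pos
    rw [div_le_div_iff₀ hrXpos hrYpos]
    have hmineq : ηmin * (Y.ncard : ℝ) = (M.rk' Y : ℝ) := by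
      rw [hP3, Nat.card_coe_set_eq, div_mul_cancel₀]
      positivity
    nlinarith [hminle e0, hYcard_pos]
  have harb : M.arboricity = D :=
    le_antisymm (csSup_le ⟨D, hDmem⟩ hDub) (le_csSup ⟨D, hDub⟩ hDmem)
  have hP4 : ηmin = 1 / M.arboricity := by
    rw [harb, hD, one_div_div, ← Nat.card_coe_set_eq, hP3]
  -- ## Part 5a
  have hv_eq : Y.indicator (fun _ => ηmin)
      = ∑ i ∈ t, w i • ((Bs i ∩ Y).indicator (1 : α → ℝ)) := by
    funext e
    rw [Finset.sum_apply]
    by_cases he : e ∈ Y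
    · rw [Set.indicator_of_mem he]
      have hee : ηs e = ηmin := by rw [hYdef] at he; exact he
      rw [← hee, hηs_eq e]
      apply Finset.sum_congr rfl
      intro i hi
      rw [Pi.smul_apply, smul_eq_mul]
      congr 1
      by_cases heB : e ∈ Bs i
      · rw [Set.indicator_of_mem heB, Set.indicator_of_mem (Set.mem_inter heB he)]
      · rw [Set.indicator_of_notMem heB, Set.indicator_of_notMem (fun h => heB h.1)]
    · rw [Set.indicator_of_notMem he]
      symm
      apply Finset.sum_eq_zero
      intro i hi
      rw [Pi.smul_apply, smul_eq_mul, Set.indicator_of_notMem (fun h => he h.2), mul_zero]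
  have hP5a : Y.indicator (fun _ => ηmin) ∈ convexHull ℝ (M ↾ Y).baseVecs := by
    rw [hv_eq]
    exact (convex_convexHull ℝ _).sum_mem (fun i hi => (hw0 i hi).le) hw1
      (fun i hi => subset_convexHull ℝ _ ⟨Bs i ∩ Y, (hbasis i hi).restrict_isBase, rfl⟩)
  -- ## Part 5b
  have hmineq : ηmin * (Y.ncard : ℝ) = (M.rk' Y : ℝ) := by
    rw [hP3, Nat.card_coe_set_eq, div_mul_cancel₀]
    positivity
  have hP5b : ∀ η ∈ convexHull ℝ (M ↾ Y).baseVecs,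
      ∑ e, (Y.indicator fun _ => ηmin) e ^ 2 ≤ ∑ e, η e ^ 2 := by
    intro η hη
    rw [_root_.convexHull_eq] at hη
    obtain ⟨ι', s, u, x, hu0, hu1, hx, hcm'⟩ := hη
    rw [Finset.centerMass_eq_of_sum_1 _ _ hu1] at hcm'
    choose! Cs hCs hxC using hx
    have hCbasis : ∀ j ∈ s, M.IsBasis (Cs j) Y := fun j hj =>
      (isBase_restrict_iff hYE).1 (hCs j hj)
    have hηe : ∀ e, η e = ∑ j ∈ s, u j * (Cs j).indicator (1 : α → ℝ) e := fun e => by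
      rw [← hcm', Finset.sum_apply]
      exact Finset.sum_congr rfl (fun j hj => by rw [Pi.smul_apply, smul_eq_mul, hxC j hj])
    have hsumYη : ∑ e ∈ fs Y, η e = (M.rk' Y : ℝ) := by
      calc ∑ e ∈ fs Y, η e
          = ∑ j ∈ s, ∑ e ∈ fs Y, u j * (Cs j).indicator (1 : α → ℝ) e := by
            rw [Finset.sum_congr rfl (fun e (_ : e ∈ fs Y) => hηe e), Finset.sum_comm]
        _ = ∑ j ∈ s, u j * ((Cs j ∩ Y).ncard : ℝ) :=
            Finset.sum_congr rfl (fun j hj => by rw [← Finset.mul_sum, sum_fs_indicator_one])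
        _ = ∑ j ∈ s, u j * (M.rk' Y : ℝ) := Finset.sum_congr rfl (fun j hj => by
              rw [Set.inter_eq_self_of_subset_left (hCbasis j hj).subset,
                ← rk'_eq_of_basis (hCbasis j hj)])
        _ = _ := by rw [← Finset.sum_mul, hu1, one_mul]
    have hLHS : ∑ e, (Y.indicator fun _ => ηmin) e ^ 2 = (Y.ncard : ℝ) * ηmin ^ 2 := by
      have h1 : ∀ e, (Y.indicator (fun _ => ηmin) e) ^ 2
          = Y.indicator (fun _ => ηmin ^ 2) e := by
        intro e
        by_cases he : e ∈ Y
        · rw [Set.indicator_of_mem he, Set.indicator_of_mem he]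
        · rw [Set.indicator_of_notMem he, Set.indicator_of_notMem he]
          ring
      rw [Finset.sum_congr rfl (fun e _ => h1 e), sum_univ_indicator, Finset.sum_const,
        card_fs, nsmul_eq_mul]
    have hCS : (∑ e ∈ fs Y, η e) ^ 2 ≤ (fs Y).card * ∑ e ∈ fs Y, η e ^ 2 :=
      sq_sum_le_card_mul_sum_sq
    have hRHS : ∑ e ∈ fs Y, η e ^ 2 ≤ ∑ e, η e ^ 2 :=
      Finset.sum_le_sum_of_subset_of_nonneg (Finset.subset_univ _) (fun e _ _ => sq_nonneg _)
    rw [hLHS]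
    rw [hsumYη, card_fs] at hCS
    have hYpos : (0 : ℝ) < (Y.ncard : ℝ) := by exact_mod_cast hYcard_pos
    nlinarith [hRHS, hCS]
  exact ⟨hP1, hP2, ⟨hP3, hmin_pos⟩, hP4, hP5a, hP5b⟩
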